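/- When a = −2, the coefficient of determination for the perturbed response y+ε equals R², the coefficient of determination of the original response, for every b > 0. -/
import Mathlib


open Matrix BigOperators

/-- Euclidean norm of a vector in ℝⁿ. -/
noncomputable def nrm {n : ℕ} (v : Fin n → ℝ) : ℝ := Real.sqrt (v ⬝ᵥ v)

lemma dot_self_nonneg {n : ℕ} (v : Fin n → ℝ) : 0 ≤ v ⬝ᵥ v :=
  Finset.sum_nonneg fun i _ => mul_self_nonneg (v i)

lemma nrm_sq {n : ℕ} (v : Fin n → ℝ) : nrm v ^ 2 = v ⬝ᵥ v :=
  Real.sq_sqrt (dot_self_nonneg v)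

lemma dot_self_pos {n : ℕ} {v : Fin n → ℝ} (hv : v ≠ 0) : 0 < v ⬝ᵥ v := by
  rcases (dot_self_nonneg v).lt_or_eq with h | h
  · exact h
  · exfalso
    apply hv
    funext i
    have := (Finset.sum_eq_zero_iff_of_nonneg
      (fun i _ => mul_self_nonneg (v i))).mp h.symm i (Finset.mem_univ i)
    have : v i = 0 := by nlinarith
    simpa using this

lemma nrm_pos {n : ℕ} {v : Fin n → ℝ} (hv : v ≠ 0) : 0 < nrm v :=
  Real.sqrt_pos.mpr (dot_self_pos hv)

/-- When a = −2, for every b > 0 the coefficient of determination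
of the perturbed response y+ε equals R². -/
theorem R_squared_invariant_a_eq_neg_two {n p : ℕ}
    (X : Matrix (Fin n) (Fin (p + 1)) ℝ)
    (hX : IsUnit (Xᵀ * X).det)
    (hone : ∃ j, ∀ i, X i j = 1)
    (y e : Fin n → ℝ)
    (he : e = y - X.mulVec ((Xᵀ * X)⁻¹.mulVec (Xᵀ.mulVec y)))
    (he0 : e ≠ 0)
    (ybar : ℝ) (hybar : ybar = (∑ i, y i) / (n : ℝ))
    (hy : y ≠ fun _ => ybar)
    (u : Fin n → ℝ) (hu0 : u ≠ 0)
    (hXu : Xᵀ.mulVec u = 0) (heu : e ⬝ᵥ u = 0)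
    (b : ℝ) (hb : 0 < b)
    (ε : Fin n → ℝ)
    (hε : ε = ((-2 : ℝ) * nrm e / (1 + b)) •
        ((nrm e)⁻¹ • e + Real.sqrt b • ((nrm u)⁻¹ • u)))
    (R2 : ℝ) (hR2 : R2 = 1 - (nrm e) ^ 2 / (nrm (y - fun _ => ybar)) ^ 2)
    (R2t : ℝ)
    (hR2t : R2t = 1 - (nrm (e + ε)) ^ 2 / (nrm (y + ε - fun _ => ybar)) ^ 2) :
    R2t = R2 := by
  obtain ⟨j, hj⟩ := hone
  have hne : 0 < nrm e := nrm_pos he0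
  have hnu : 0 < nrm u := nrm_pos hu0
  have hee : e ⬝ᵥ e = nrm e ^ 2 := (nrm_sq e).symm
  have huu : u ⬝ᵥ u = nrm u ^ 2 := (nrm_sq u).symm
  have hue : u ⬝ᵥ e = 0 := by rw [dotProduct_comm]; exact heu
  have hsb : Real.sqrt b * Real.sqrt b = b := Real.mul_self_sqrt hb.le
  have h1b : (1 : ℝ) + b ≠ 0 := by positivity
  set c : ℝ := (-2 : ℝ) * nrm e / (1 + b) with hc
  -- residual orthogonal to columns of X
  have hXe : Xᵀ.mulVec e = 0 := by
    rw [he, Matrix.mulVec_sub, Matrix.mulVec_mulVec, Matrix.mulVec_mulVec,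
      Matrix.mul_nonsing_inv _ hX, Matrix.one_mulVec, sub_self]
  -- ε is orthogonal to the column space of X
  have hXε : Xᵀ.mulVec ε = 0 := by
    rw [hε, Matrix.mulVec_smul, Matrix.mulVec_add, Matrix.mulVec_smul,
      Matrix.mulVec_smul, Matrix.mulVec_smul, hXe, hXu]
    simp
  -- dot products with ε
  have heε : e ⬝ᵥ ε = c * nrm e := by
    rw [hε]
    simp only [dotProduct_smul, dotProduct_add, smul_eq_mul]
    rw [hee, heu]
    field_simp
    ring
  have huε : u ⬝ᵥ ε = c * Real.sqrt b * nrm u := by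
    rw [hε]
    simp only [dotProduct_smul, dotProduct_add, smul_eq_mul]
    rw [huu, hue]
    field_simp
    ring
  have hεε : ε ⬝ᵥ ε = c ^ 2 * (1 + b) := by
    nth_rewrite 1 [hε]
    simp only [smul_dotProduct, add_dotProduct, smul_eq_mul]
    rw [heε, huε]
    have hb2 : Real.sqrt b ^ 2 = b := Real.sq_sqrt hb.le
    field_simp [hb2]
    linear_combination c ^ 2 * hsb
  have hkey : 2 * (e ⬝ᵥ ε) + ε ⬝ᵥ ε = 0 := by
    rw [heε, hεε, hc]
    field_simp
    ring
  -- numerator invariance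
  have hnum : (e + ε) ⬝ᵥ (e + ε) = e ⬝ᵥ e := by
    have hεe : ε ⬝ᵥ e = e ⬝ᵥ ε := dotProduct_comm _ _
    rw [add_dotProduct, dotProduct_add, dotProduct_add, hεe]
    linarith [hkey]
  -- w := y - ȳ1; w - e lies in the column space of X
  set w : Fin n → ℝ := y - fun _ => ybar with hw
  have hwe : w - e = X.mulVec (((Xᵀ * X)⁻¹.mulVec (Xᵀ.mulVec y)) - Pi.single j ybar) := by
    rw [Matrix.mulVec_sub, Matrix.mulVec_single]
    funext i
    simp [hw, he, hj i]
  have hwεe : w ⬝ᵥ ε = e ⬝ᵥ ε := by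
    have h1 : (w - e) ⬝ᵥ ε = 0 := by
      rw [hwe, dotProduct_comm, Matrix.dotProduct_mulVec, ← Matrix.mulVec_transpose, hXε]
      simp
    have := sub_dotProduct w e ε
    rw [h1] at this
    linarith
  have hden : (y + ε - fun _ => ybar) ⬝ᵥ (y + ε - fun _ => ybar) = w ⬝ᵥ w := by
    have hv : (y + ε - fun _ => ybar) = w + ε := by
      funext i; simp [hw]; ring
    rw [hv, add_dotProduct, dotProduct_add, dotProduct_add,
      dotProduct_comm ε w, hwεe]
    linarith [hkey]
  rw [hR2t, hR2, nrm_sq, nrm_sq, nrm_sq, nrm_sq, hnum, hden]
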